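/- For all x ∈ ST_n^r and y ∈ ST_m^s, one has Δ(x×y) = Σ x_(1) ⊗ (x_(2)×y) + x ⊗ y + Σ (x×y_(1)) ⊗ y_(2) in 𝕂[ST]⊗𝕂[ST], where Δ(x) = Σ x_(1)⊗x_(2) and Δ(y) = Σ y_(1)⊗y_(2). (Equivalently, (𝕂[ST], ×, Δ) is a nonunital infinitesimal bialgebra.) -/

import Mathlib

open scoped TensorProduct

namespace SurjPerm

/-- The maximal value of a word (the `r` such that a surjection lands in `{1,…,r}`). -/
def rk (l : List ℕ) : ℕ := l.foldr max 0

/-- `l` is (the list of values of) a surjective map `{1,…,n} → {1,…,r}`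
    with `n = l.length ≥ 1` and `r = rk l`. -/
def IsST (l : List ℕ) : Prop := l ≠ [] ∧ ∀ k, k ∈ l ↔ 1 ≤ k ∧ k ≤ rk l

/-- membership in `ST_n^r`. -/
def memST (l : List ℕ) (n r : ℕ) : Prop := IsST l ∧ l.length = n ∧ rk l = r

/-- concatenation `x × y`. -/
def cat (x y : List ℕ) : List ℕ := x ++ y.map (· + rk x)

/-- iterated concatenation `x¹ × x² × … × xᵖ`. -/
def catAll (l : List (List ℕ)) : List ℕ := l.foldr cat []

/-- standardization of a word. -/
def stdList (l : List ℕ) : List ℕ := l.map fun v => (l.dedup.filter (· ≤ v)).length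

/-- corestriction `x|^K`. -/
def corestrict (x : List ℕ) (K : Finset ℕ) : List ℕ := stdList (x.filter (· ∈ K))

/-- the `i`-th entry of a word, `1`-indexed: `ent f i = f(i)`. -/
def ent (l : List ℕ) (i : ℕ) : ℕ := l.getD (i - 1) 0

/-- composition `f ∘ x` of the map (word) `f` with the map (word) `x`. -/
def wcomp (f x : List ℕ) : List ℕ := x.map fun v => ent f v

/-- the identity permutation `1_n` as a word. -/
def idW (n : ℕ) : List ℕ := (List.range n).map (· + 1)

/-- the permutation `ε(r₁,…,r_p)` as a word: the `i`-th block of positions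
    carries the values shifted above all later blocks. -/
def epsW : List ℕ → List ℕ
  | [] => []
  | r :: rs => ((List.range r).map (· + rs.sum + 1)) ++ epsW rs

/-- `x \ y := ε(r,s) ∘ (x × y)`. -/
def bsl (x y : List ℕ) : List ℕ := wcomp (epsW [rk x, rk y]) (cat x y)

/-- `f` is strictly increasing on each block of the composition `ns`. -/
def blockIncr (ns f : List ℕ) : Prop :=
  ∀ k, k < ns.length → ∀ i j, (ns.take k).sum < i → i < j → j ≤ (ns.take (k + 1)).sum →
    ent f i < ent f j

/-- `(n₁,…,n_p)`-stuffles. -/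
def IsStuffle (ns f : List ℕ) : Prop := IsST f ∧ f.length = ns.sum ∧ blockIncr ns f

/-- `(n₁,…,n_p)`-shuffles: stuffles which are permutations. -/
def IsShuffle (ns f : List ℕ) : Prop := IsStuffle ns f ∧ rk f = ns.sum

/-- irreducible surjections. -/
def Irr (l : List ℕ) : Prop := IsST l ∧ ¬ ∃ g h, IsST g ∧ IsST h ∧ l = cat g h

/-- the set of irreducible surjections of arity `n`. -/
def IrrN (n : ℕ) : Set (List ℕ) := {l | Irr l ∧ l.length = n}

/-- the product `x · y` on surjections. -/
def dotW (x y : List ℕ) : List ℕ :=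
  x.map (fun v => if v < rk x then v else rk x + rk y - 1) ++
    y.map (fun v => if v < rk y then v + rk x - 1 else rk x + rk y - 1)

/-- iterated `·` product `x¹ · x² · … · xᵖ`. -/
def dotAll : List (List ℕ) → List ℕ
  | [] => []
  | a :: as => as.foldl dotW a

/-- indecomposable surjections (for the `·` product). -/
def Indec (l : List ℕ) : Prop := IsST l ∧ ¬ ∃ a b, IsST a ∧ IsST b ∧ l = dotW a b

/-- the set `𝒟`. -/
def inD (x : List ℕ) : Prop :=
  IsST x ∧ ((x = [1] ∨ x = [1, 1]) ∨
    (3 ≤ x.length ∧ Irr x ∧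
      ¬ ∃ y z, ∃ _ : y.length < x.length, inD y ∧ IsST z ∧ x = bsl y z))
termination_by x.length
decreasing_by assumption

/-- the set `𝒞`. -/
def inC (x : List ℕ) : Prop :=
  Irr x ∧
    ((∃ y z, ∃ _ : y.length < x.length, Irr y ∧ ¬ inC y ∧ IsST z ∧ x = bsl y z) ∨
      (∃ a b, IsST a ∧ IsST b ∧ x = dotW a b))
termination_by x.length
decreasing_by assumption

/-- the set `𝔅(l)`, with `𝔅(0) = 𝒟`. -/
def inBfrak (l : ℕ) (x : List ℕ) : Prop :=
  if l = 0 then inD x else ∃ u v, inD u ∧ IsST v ∧ v.length = l ∧ x = bsl u v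

/-- `t_i ∘ f`: exchange the values `i` and `i+1`. -/
def swapVal (i : ℕ) (l : List ℕ) : List ℕ :=
  l.map fun v => if v = i then i + 1 else if v = i + 1 then i else v

/-- covering relation of the weak Bruhat order on `ST_n^r`:
    `f < t_i ∘ f` whenever `f⁻¹(i) < f⁻¹(i+1)`. -/
def wBCov (f g : List ℕ) : Prop :=
  ∃ i, 1 ≤ i ∧ i + 1 ≤ rk f ∧ g = swapVal i f ∧
    ∀ a b, a < f.length → b < f.length → f.getD a 0 = i → f.getD b 0 = i + 1 → a < b

/-- strict weak Bruhat order. -/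
def wBlt : List ℕ → List ℕ → Prop := Relation.TransGen wBCov

/-- weak Bruhat order. -/
def wBle : List ℕ → List ℕ → Prop := Relation.ReflTransGen wBCov

/-- the (0-indexed) positions `j₁-1 < … < j_λ-1` where the maximal value is attained. -/
def maxPos (x : List ℕ) : List ℕ :=
  (List.range x.length).filter fun i => x.getD i 0 = rk x

/-- `λ(x)`. -/
def lam (x : List ℕ) : ℕ := (maxPos x).length

/-- `𝕄(x) = (𝕄(x)_λ, …, 𝕄(x)₁)`. -/
def Mword (x : List ℕ) : List ℕ :=
  (List.zipWith (fun a b => b - a - 1) (maxPos x) ((maxPos x).drop 1) ++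
    [x.length - (maxPos x).getLastD 0 - 1]).reverse

/-- the pieces `x|^{1..l₁}, x|^{l₁+1..l₂}, …, x|^{l_p+1..r}`. -/
def pieces (x : List ℕ) (ls : List ℕ) : List (List ℕ) :=
  ((0 :: ls).zip (ls ++ [rk x])).map fun p => corestrict x (Finset.Icc (p.1 + 1) p.2)

/-- `x^{(l₁,…,l_p)}`. -/
def xfam (x : List ℕ) (ls : List ℕ) : List ℕ := catAll (pieces x ls)

variable (𝕂 : Type) [Field 𝕂]

/-- the vector space `𝕂[ST]` (with basis all words; only the basis elements in `ST` matter). -/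
abbrev V := List ℕ →₀ 𝕂

/-- the coproduct `Δ`. -/
noncomputable def Delta : V 𝕂 →ₗ[𝕂] TensorProduct 𝕂 (V 𝕂) (V 𝕂) :=
  Finsupp.lsum 𝕂 fun x => LinearMap.toSpanSingleton 𝕂 _
    (∑ i ∈ Finset.Ico 1 (rk x),
      Finsupp.single (corestrict x (Finset.Icc 1 i)) (1 : 𝕂) ⊗ₜ[𝕂]
        Finsupp.single (corestrict x (Finset.Icc (i + 1) (rk x))) (1 : 𝕂))

/-- the subspace `𝕂[ST_n]`. -/
noncomputable def STspanN (n : ℕ) : Submodule 𝕂 (V 𝕂) :=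
  Submodule.span 𝕂 {v | ∃ l, IsST l ∧ l.length = n ∧ v = Finsupp.single l 1}

/-- `Prim(ST)_n = {v ∈ 𝕂[ST_n] : Δ v = 0}`. -/
noncomputable def PrimN (n : ℕ) : Submodule 𝕂 (V 𝕂) :=
  STspanN 𝕂 n ⊓ LinearMap.ker (Delta 𝕂)

/-- the projection `E`. -/
noncomputable def Emap : V 𝕂 →ₗ[𝕂] V 𝕂 :=
  Finsupp.lsum 𝕂 fun x => LinearMap.toSpanSingleton 𝕂 _
    (∑ᶠ ls ∈ {ls : List ℕ | ls.Chain' (· < ·) ∧ ∀ l ∈ ls, 0 < l ∧ l < rk x},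
      ((-1 : 𝕂) ^ ls.length) • Finsupp.single (xfam x ls) (1 : 𝕂))

/-- generic bilinear-on-basis operation indexed by a set of shuffles. -/
noncomputable def shOp (P : ℕ → ℕ → List ℕ → Prop) (a b : V 𝕂) : V 𝕂 :=
  Finsupp.sum a fun x cx => Finsupp.sum b fun y cy =>
    (cx * cy) • ∑ᶠ f ∈ {f : List ℕ | IsShuffle [rk x, rk y] f ∧ P (rk x) (rk y) f},
      Finsupp.single (wcomp f (cat x y)) (1 : 𝕂)

/-- the dendriform operation `≻`. -/
noncomputable def succOp : V 𝕂 → V 𝕂 → V 𝕂 :=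
  shOp 𝕂 fun r s f => ent f r < ent f (r + s)

/-- the dendriform operation `≺`. -/
noncomputable def precOp : V 𝕂 → V 𝕂 → V 𝕂 :=
  shOp 𝕂 fun r s f => ent f (r + s) < ent f r

/-- `ω^≺(y₁,…,y_k) = y₁ ≺ (y₂ ≺ (… ≺ y_k))`. -/
noncomputable def omPrec : List (V 𝕂) → V 𝕂
  | [] => 0
  | [a] => a
  | a :: as => precOp 𝕂 a (omPrec as)

/-- `ω^≻(y₁,…,y_k) = ((y₁ ≻ y₂) ≻ …) ≻ y_k`. -/
noncomputable def omSucc : List (V 𝕂) → V 𝕂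
  | [] => 0
  | a :: as => as.foldl (succOp 𝕂) a

/-- `ω^≺(l) ≻ x ≺ ω^≻(r)`, empty factors omitted. -/
noncomputable def mterm (x : V 𝕂) : List (V 𝕂) → List (V 𝕂) → V 𝕂
  | [], [] => x
  | [], r => precOp 𝕂 x (omSucc 𝕂 r)
  | l, [] => succOp 𝕂 (omPrec 𝕂 l) x
  | l, r => precOp 𝕂 (succOp 𝕂 (omPrec 𝕂 l) x) (omSucc 𝕂 r)

/-- the brace operation `M^{ST}_{1k}(x; y₁,…,y_k)`. -/
noncomputable def braceM (x : V 𝕂) (ys : List (V 𝕂)) : V 𝕂 :=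
  ∑ j ∈ Finset.range (ys.length + 1),
    ((-1 : 𝕂) ^ (ys.length - j)) • mterm 𝕂 x (ys.take j) (ys.drop j)

/-- generic bilinear-on-basis operation indexed by a set of stuffles, with `q`-weights
    `q^{s(f) - c}` where `s(f) = |f| - rk f`. -/
noncomputable def stOp (q : 𝕂) (c : ℕ) (P : ℕ → ℕ → List ℕ → Prop) (a b : V 𝕂) : V 𝕂 :=
  Finsupp.sum a fun x cx => Finsupp.sum b fun y cy =>
    (cx * cy) • ∑ᶠ f ∈ {f : List ℕ | IsStuffle [rk x, rk y] f ∧ P (rk x) (rk y) f},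
      q ^ (f.length - rk f - c) • Finsupp.single (wcomp f (cat x y)) (1 : 𝕂)

/-- `≻_q`. -/
noncomputable def succQ (q : 𝕂) : V 𝕂 → V 𝕂 → V 𝕂 :=
  stOp 𝕂 q 0 fun r s f => ent f r < ent f (r + s)

/-- `≺_q`. -/
noncomputable def precQ (q : 𝕂) : V 𝕂 → V 𝕂 → V 𝕂 :=
  stOp 𝕂 q 0 fun r s f => ent f (r + s) < ent f r

/-- `·_q`. -/
noncomputable def dotQ (q : 𝕂) : V 𝕂 → V 𝕂 → V 𝕂 :=
  stOp 𝕂 q 1 fun r s f => ent f r = ent f (r + s)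

/-- `≽_q = ≻_q + q ·_q`. -/
noncomputable def succcQ (q : 𝕂) (a b : V 𝕂) : V 𝕂 := succQ 𝕂 q a b + q • dotQ 𝕂 q a b

/-- `ω^{≺_q}`. -/
noncomputable def omPrecQ (q : 𝕂) : List (V 𝕂) → V 𝕂
  | [] => 0
  | [a] => a
  | a :: as => precQ 𝕂 q a (omPrecQ q as)

/-- `ω^{≽_q}`. -/
noncomputable def omSucccQ (q : 𝕂) : List (V 𝕂) → V 𝕂
  | [] => 0
  | a :: as => as.foldl (succcQ 𝕂 q) a

/-- `ω^{≺_q}(l) ≽_q x ≺_q ω^{≽_q}(r)`, empty factors omitted. -/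
noncomputable def mtermQ (q : 𝕂) (x : V 𝕂) : List (V 𝕂) → List (V 𝕂) → V 𝕂
  | [], [] => x
  | [], r => precQ 𝕂 q x (omSucccQ 𝕂 q r)
  | l, [] => succcQ 𝕂 q (omPrecQ 𝕂 q l) x
  | l, r => precQ 𝕂 q (succcQ 𝕂 q (omPrecQ 𝕂 q l) x) (omSucccQ 𝕂 q r)

/-- the brace operation `M^{ST(q)}_{1k}`. -/
noncomputable def braceMQ (q : 𝕂) (x : V 𝕂) (ys : List (V 𝕂)) : V 𝕂 :=
  ∑ j ∈ Finset.range (ys.length + 1),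
    ((-1 : 𝕂) ^ (ys.length - j)) • mtermQ 𝕂 q x (ys.take j) (ys.drop j)

/-- the shuffle product of two basis elements. -/
noncomputable def shufSingle (x y : List ℕ) : V 𝕂 :=
  ∑ᶠ f ∈ {f : List ℕ | IsShuffle [rk x, rk y] f},
    Finsupp.single (wcomp f (cat x y)) (1 : 𝕂)

/-- the shuffle product `*` on `𝕂[ST]`, as a bilinear map. -/
noncomputable def shufL : V 𝕂 →ₗ[𝕂] V 𝕂 →ₗ[𝕂] V 𝕂 :=
  Finsupp.lsum 𝕂 fun x => LinearMap.toSpanSingleton 𝕂 _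
    (Finsupp.lsum 𝕂 fun y => LinearMap.toSpanSingleton 𝕂 _ (shufSingle 𝕂 x y))

/-- the augmented space `𝕂·1 ⊕ 𝕂[ST]`. -/
abbrev Vp := 𝕂 × V 𝕂

/-- inclusion `𝕂[ST] ↪ 𝕂·1 ⊕ 𝕂[ST]`. -/
noncomputable def inclV : V 𝕂 →ₗ[𝕂] Vp 𝕂 := LinearMap.inr 𝕂 𝕂 (V 𝕂)

/-- the unit `1`. -/
noncomputable def oneVp : Vp 𝕂 := (1, 0)

/-- the unital extension of the shuffle product to `𝕂·1 ⊕ 𝕂[ST]`, as a bilinear map: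
    `(a + x)(b + y) = ab + (a y + b x + x * y)`.  In particular `1 * u = u = u * 1`. -/
noncomputable def mulVp : Vp 𝕂 →ₗ[𝕂] Vp 𝕂 →ₗ[𝕂] Vp 𝕂 :=
  LinearMap.mk₂ 𝕂 (fun u v => (u.1 * v.1, u.1 • v.2 + v.1 • u.2 + shufL 𝕂 u.2 v.2))
    (fun u u' v => by
      refine Prod.ext ?_ ?_ <;>
        simp [add_mul, add_smul, smul_add, map_add, LinearMap.add_apply] <;> abel)
    (fun c u v => by
      refine Prod.ext ?_ ?_ <;>
        simp [mul_assoc, mul_smul, smul_add, smul_comm c v.1] <;> abel)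
    (fun u v v' => by
      refine Prod.ext ?_ ?_ <;>
        simp [mul_add, add_smul, smul_add, map_add, LinearMap.add_apply] <;> abel)
    (fun c u v => by
      refine Prod.ext ?_ ?_ <;>
        simp [mul_left_comm, mul_smul, smul_add, smul_comm c u.1] <;> abel)

/-- the extension `Δ⁺` of `Δ` to `𝕂·1 ⊕ 𝕂[ST]`, with `Δ⁺(1) = 1 ⊗ 1` and
    `Δ⁺(x) = x ⊗ 1 + 1 ⊗ x + Δ(x)` for `x ∈ 𝕂[ST]`. -/
noncomputable def DeltaP : Vp 𝕂 →ₗ[𝕂] TensorProduct 𝕂 (Vp 𝕂) (Vp 𝕂) :=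
  (LinearMap.toSpanSingleton 𝕂 _ (oneVp 𝕂 ⊗ₜ[𝕂] oneVp 𝕂)).comp (LinearMap.fst 𝕂 𝕂 (V 𝕂))
    + (((TensorProduct.mk 𝕂 (Vp 𝕂) (Vp 𝕂)).flip (oneVp 𝕂)).comp (inclV 𝕂)).comp
        (LinearMap.snd 𝕂 𝕂 (V 𝕂))
    + ((TensorProduct.mk 𝕂 (Vp 𝕂) (Vp 𝕂) (oneVp 𝕂)).comp (inclV 𝕂)).comp
        (LinearMap.snd 𝕂 𝕂 (V 𝕂))
    + ((TensorProduct.map (inclV 𝕂) (inclV 𝕂)).comp (Delta 𝕂)).comp (LinearMap.snd 𝕂 𝕂 (V 𝕂))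

/-- componentwise product on the tensor square: `(a⊗b)·(c⊗d) = (a·c)⊗(b·d)`. -/
noncomputable def mulTsq :
    TensorProduct 𝕂 (Vp 𝕂) (Vp 𝕂) →ₗ[𝕂]
      TensorProduct 𝕂 (Vp 𝕂) (Vp 𝕂) →ₗ[𝕂] TensorProduct 𝕂 (Vp 𝕂) (Vp 𝕂) :=
  TensorProduct.lift
    (((TensorProduct.mapBilinear (RingHom.id 𝕂) (Vp 𝕂) (Vp 𝕂) (Vp 𝕂) (Vp 𝕂)).comp (mulVp 𝕂)).compl₂
      (mulVp 𝕂))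

/-- concatenation on the right with a fixed word, linearized: `x ↦ x × y`. -/
noncomputable def catR (y : List ℕ) : V 𝕂 →ₗ[𝕂] V 𝕂 :=
  Finsupp.lsum 𝕂 fun x => LinearMap.toSpanSingleton 𝕂 _ (Finsupp.single (cat x y) (1 : 𝕂))

/-- concatenation on the left with a fixed word, linearized: `y ↦ x × y`. -/
noncomputable def catL (x : List ℕ) : V 𝕂 →ₗ[𝕂] V 𝕂 :=
  Finsupp.lsum 𝕂 fun y => LinearMap.toSpanSingleton 𝕂 _ (Finsupp.single (cat x y) (1 : 𝕂))

/-- `Sh^•(r₁,…,r_p)`: surjections onto `{1,…,R-p+1}` (where `R = r₁+…+r_p`), strictly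
    increasing on each block, attaining the maximal value exactly at the block ends, and whose
    corestriction to `{1,…,R-p}` is a `(r₁-1,…,r_p-1)`-shuffle. -/
def ShBull (rs : List ℕ) (f : List ℕ) : Prop :=
  memST f rs.sum (rs.sum - rs.length + 1) ∧ blockIncr rs f ∧
    (∀ i, 1 ≤ i → i ≤ rs.sum →
      (ent f i = rs.sum - rs.length + 1 ↔ ∃ k, k < rs.length ∧ i = (rs.take (k + 1)).sum)) ∧
    IsShuffle (rs.map (· - 1)) (corestrict f (Finset.Icc 1 (rs.sum - rs.length)))


lemma aux_rk_cons (a : ℕ) (t : List ℕ) : rk (a :: t) = max a (rk t) := rfl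

lemma aux_le_rk {l : List ℕ} {u : ℕ} (h : u ∈ l) : u ≤ rk l := by
  induction l with
  | nil => cases h
  | cons a t ih =>
    rcases List.mem_cons.1 h with rfl | h
    · exact le_max_left _ _
    · exact le_trans (ih h) (le_max_right _ _)

lemma aux_rk_le {l : List ℕ} {m : ℕ} (h : ∀ u ∈ l, u ≤ m) : rk l ≤ m := by
  induction l with
  | nil => exact Nat.zero_le m
  | cons a t ih =>
    exact max_le (h a List.mem_cons_self) (ih fun u hu => h u (List.mem_cons_of_mem _ hu))

lemma aux_rk_mem {l : List ℕ} (h : l ≠ []) : rk l ∈ l := by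
  induction l with
  | nil => exact absurd rfl h
  | cons a t ih =>
    rcases eq_or_ne t [] with rfl | ht
    · simp [rk]
    · rw [aux_rk_cons]
      rcases max_cases a (rk t) with ⟨h1, _⟩ | ⟨h1, _⟩
      · rw [h1]; exact List.mem_cons_self
      · rw [h1]; exact List.mem_cons_of_mem _ (ih ht)

lemma aux_rk_append (a b : List ℕ) : rk (a ++ b) = max (rk a) (rk b) := by
  induction a with
  | nil => simp [rk]
  | cons h t ih => simp only [List.cons_append, aux_rk_cons, ih, max_assoc]

lemma aux_rk_map_add (l : List ℕ) (r : ℕ) (h : l ≠ []) :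
    rk (l.map (· + r)) = rk l + r := by
  induction l with
  | nil => exact absurd rfl h
  | cons a t ih =>
    rcases eq_or_ne t [] with rfl | ht
    · simp [rk]
    · simp only [List.map_cons, aux_rk_cons, ih ht]
      omega

/-- the "count of distinct values ≤ v" function. -/
def cnt (l : List ℕ) (v : ℕ) : ℕ := (l.toFinset.filter (· ≤ v)).card

lemma aux_dedup_toFinset (l : List ℕ) : l.dedup.toFinset = l.toFinset := by
  ext a; simp [List.mem_dedup]

lemma aux_stdList_eq (l : List ℕ) : stdList l = l.map (cnt l) := by
  unfold stdList cnt
  refine List.map_congr_left fun v _ => ?_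
  rw [← List.toFinset_card_of_nodup ((l.nodup_dedup).filter _), List.toFinset_filter,
    aux_dedup_toFinset]
  congr 1
  ext a
  simp

lemma aux_cnt_map_add (l : List ℕ) (r v : ℕ) : cnt (l.map (· + r)) (v + r) = cnt l v := by
  unfold cnt
  have hmap : (l.map (· + r)).toFinset = l.toFinset.image (· + r) := by
    ext a; simp
  rw [hmap]
  rw [← Finset.card_image_of_injective (l.toFinset.filter (· ≤ v)) (add_left_injective r)]
  congr 1
  ext a
  simp only [Finset.mem_filter, Finset.mem_image]
  constructor
  · rintro ⟨⟨b, hb, rfl⟩, hle⟩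
    exact ⟨b, ⟨hb, by omega⟩, rfl⟩
  · rintro ⟨b, ⟨hb, hle⟩, rfl⟩
    exact ⟨⟨b, hb, rfl⟩, by omega⟩

lemma aux_stdList_map_add (l : List ℕ) (r : ℕ) :
    stdList (l.map (· + r)) = stdList l := by
  rw [aux_stdList_eq, aux_stdList_eq, List.map_map]
  exact List.map_congr_left fun v _ => aux_cnt_map_add l r v

lemma aux_stdList_append {a b : List ℕ} (h : ∀ u ∈ a, ∀ w ∈ b, u < w) :
    stdList (a ++ b) = stdList a ++ (stdList b).map (· + a.toFinset.card) := by
  rw [aux_stdList_eq, aux_stdList_eq, aux_stdList_eq, List.map_append, List.map_map]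
  congr 1
  · refine List.map_congr_left fun u hu => ?_
    unfold cnt
    rw [List.toFinset_append]
    congr 1
    ext c
    simp only [Finset.mem_filter, Finset.mem_union, List.mem_toFinset]
    constructor
    · rintro ⟨hc | hc, hle⟩
      · exact ⟨hc, hle⟩
      · exact absurd hle (by have := h u hu c hc; omega)
    · rintro ⟨hc, hle⟩; exact ⟨Or.inl hc, hle⟩
  · refine List.map_congr_left fun w hw => ?_
    unfold cnt
    simp only [Function.comp]
    rw [List.toFinset_append, Finset.filter_union,
      Finset.card_union_of_disjoint, Finset.filter_true_of_mem, add_comm]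
    · intro c hc
      simp only [List.mem_toFinset] at hc
      exact le_of_lt (h c hc w hw)
    · refine Finset.disjoint_left.2 fun c hc1 hc2 => ?_
      simp only [Finset.mem_filter, List.mem_toFinset] at hc1 hc2
      exact absurd (h c hc1.1 c hc2.1) (lt_irrefl c)

lemma aux_one_le_rk {x : List ℕ} (hx : IsST x) : 1 ≤ rk x :=
  ((hx.2 _).1 (aux_rk_mem hx.1)).1

lemma aux_toFinset_of_isST {x : List ℕ} (hx : IsST x) : x.toFinset = Finset.Icc 1 (rk x) := by
  ext k; simp [hx.2 k]

lemma aux_cnt_of_isST {x : List ℕ} (hx : IsST x) {v : ℕ} (hv : v ∈ x) : cnt x v = v := by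
  unfold cnt
  rw [aux_toFinset_of_isST hx]
  have h1 := (hx.2 v).1 hv
  have h2 : Finset.filter (· ≤ v) (Finset.Icc 1 (rk x)) = Finset.Icc 1 v := by
    ext a; simp only [Finset.mem_filter, Finset.mem_Icc]; omega
  rw [h2, Nat.card_Icc]; omega

lemma aux_stdList_of_isST {x : List ℕ} (hx : IsST x) : stdList x = x := by
  rw [aux_stdList_eq]
  conv_rhs => rw [← List.map_id x]
  exact List.map_congr_left fun v hv => aux_cnt_of_isST hx hv

lemma aux_card_toFinset_of_isST {x : List ℕ} (hx : IsST x) : x.toFinset.card = rk x := by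
  rw [aux_toFinset_of_isST hx, Nat.card_Icc]; omega

lemma aux_rk_stdList (l : List ℕ) : rk (stdList l) = l.toFinset.card := by
  rcases eq_or_ne l [] with rfl | hl
  · simp [stdList, rk]
  · apply le_antisymm
    · apply aux_rk_le
      intro u hu
      rw [aux_stdList_eq] at hu
      rcases List.mem_map.1 hu with ⟨v, _, rfl⟩
      exact Finset.card_le_card (Finset.filter_subset _ _)
    · have hm : cnt l (rk l) ∈ stdList l := by
        rw [aux_stdList_eq]; exact List.mem_map_of_mem (aux_rk_mem hl)
      have he : cnt l (rk l) = l.toFinset.card := by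
        unfold cnt
        rw [Finset.filter_true_of_mem fun c hc => aux_le_rk (List.mem_toFinset.1 hc)]
      exact he ▸ aux_le_rk hm

lemma aux_rk_cat {x y : List ℕ} (hy : y ≠ []) : rk (cat x y) = rk x + rk y := by
  unfold cat
  rw [aux_rk_append, aux_rk_map_add y (rk x) hy]
  omega

lemma aux_corestrict_full {x : List ℕ} (hx : IsST x) :
    corestrict x (Finset.Icc 1 (rk x)) = x := by
  unfold corestrict
  rw [List.filter_eq_self.2 fun a ha => by
    simpa [Finset.mem_Icc] using (hx.2 a).1 ha, aux_stdList_of_isST hx]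

lemma aux_corestrict_empty (x : List ℕ) {c d : ℕ} (h : d < c) :
    corestrict x (Finset.Icc c d) = [] := by
  unfold corestrict
  rw [List.filter_eq_nil_iff.2 fun a _ => by simp [Finset.mem_Icc]; omega]
  rfl

lemma aux_cat_nil (y : List ℕ) : cat [] y = y := by
  simp [cat, rk]

lemma aux_corA {x y : List ℕ} (hy : IsST y) {i : ℕ} (hi : i ≤ rk x) :
    corestrict (cat x y) (Finset.Icc 1 i) = corestrict x (Finset.Icc 1 i) := by
  unfold corestrict cat
  congr 1
  rw [List.filter_append]
  have h2 : (y.map (· + rk x)).filter (· ∈ Finset.Icc 1 i) = [] := by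
    rw [List.filter_eq_nil_iff]
    intro a ha
    rcases List.mem_map.1 ha with ⟨v, hv, rfl⟩
    have := ((hy.2 v).1 hv).1
    simp only [Finset.mem_Icc, decide_eq_true_eq, not_and]
    omega
  rw [h2, List.append_nil]

lemma aux_corB {x y : List ℕ} (hx : IsST x) (hy : IsST y) {i : ℕ} (hi : i ≤ rk x) :
    corestrict (cat x y) (Finset.Icc (i + 1) (rk (cat x y))) =
      cat (corestrict x (Finset.Icc (i + 1) (rk x))) y := by
  have hrk := aux_rk_cat (x := x) hy.1
  unfold corestrict cat
  rw [List.filter_append]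
  have h2 : (y.map (· + rk x)).filter (· ∈ Finset.Icc (i + 1) (rk (x ++ y.map (· + rk x)))) =
      y.map (· + rk x) := by
    rw [List.filter_eq_self]
    intro a ha
    rcases List.mem_map.1 ha with ⟨v, hv, rfl⟩
    have h3 := (hy.2 v).1 hv
    rw [← cat] at *
    simp only [Finset.mem_Icc, decide_eq_true_eq]
    omega
  rw [h2]
  have h3 : (x.filter (· ∈ Finset.Icc (i + 1) (rk (x ++ y.map (· + rk x))))) =
      (x.filter (· ∈ Finset.Icc (i + 1) (rk x))) := by
    refine List.filter_congr fun a ha => ?_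
    have h4 := (hx.2 a).1 ha
    rw [← cat] at *
    simp only [Finset.mem_Icc, decide_eq_decide]
    omega
  rw [h3]
  have h5 : ∀ u ∈ x.filter (· ∈ Finset.Icc (i + 1) (rk x)),
      ∀ w ∈ y.map (· + rk x), u < w := by
    intro u hu w hw
    rcases List.mem_map.1 hw with ⟨v, hv, rfl⟩
    have h6 := (hx.2 u).1 (List.mem_of_mem_filter hu)
    have h7 := (hy.2 v).1 hv
    omega
  rw [aux_stdList_append h5, aux_stdList_map_add, aux_stdList_of_isST hy,
    aux_rk_stdList]

lemma aux_corC {x y : List ℕ} (hx : IsST x) (hy : IsST y) {j : ℕ} (hj : j ≤ rk y) :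
    corestrict (cat x y) (Finset.Icc 1 (rk x + j)) =
      cat x (corestrict y (Finset.Icc 1 j)) := by
  unfold corestrict cat
  rw [List.filter_append]
  have h1 : x.filter (· ∈ Finset.Icc 1 (rk x + j)) = x := by
    rw [List.filter_eq_self]
    intro a ha
    have := (hx.2 a).1 ha
    simp only [Finset.mem_Icc, decide_eq_true_eq]
    omega
  have h2 : (y.map (· + rk x)).filter (· ∈ Finset.Icc 1 (rk x + j)) =
      (y.filter (· ∈ Finset.Icc 1 j)).map (· + rk x) := by
    rw [List.filter_map]
    congr 1
    refine List.filter_congr fun v hv => ?_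
    have := (hy.2 v).1 hv
    simp only [Function.comp, Finset.mem_Icc, decide_eq_decide]
    omega
  rw [h1, h2]
  have h5 : ∀ u ∈ x, ∀ w ∈ (y.filter (· ∈ Finset.Icc 1 j)).map (· + rk x), u < w := by
    intro u hu w hw
    rcases List.mem_map.1 hw with ⟨v, hv, rfl⟩
    have h6 := (hx.2 u).1 hu
    have h7 := (hy.2 v).1 (List.mem_of_mem_filter hv)
    omega
  rw [aux_stdList_append h5, aux_stdList_map_add, aux_stdList_of_isST hx,
    aux_card_toFinset_of_isST hx]

lemma aux_corD {x y : List ℕ} (hx : IsST x) (hy : IsST y) {j : ℕ} :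
    corestrict (cat x y) (Finset.Icc (rk x + j + 1) (rk (cat x y))) =
      corestrict y (Finset.Icc (j + 1) (rk y)) := by
  have hrk := aux_rk_cat (x := x) hy.1
  unfold corestrict cat
  rw [List.filter_append]
  have h1 : x.filter (· ∈ Finset.Icc (rk x + j + 1) (rk (x ++ y.map (· + rk x)))) = [] := by
    rw [List.filter_eq_nil_iff]
    intro a ha
    have := (hx.2 a).1 ha
    simp only [Finset.mem_Icc, decide_eq_true_eq, not_and]
    omega
  have h2 : (y.map (· + rk x)).filter
        (· ∈ Finset.Icc (rk x + j + 1) (rk (x ++ y.map (· + rk x)))) =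
      (y.filter (· ∈ Finset.Icc (j + 1) (rk y))).map (· + rk x) := by
    rw [List.filter_map]
    congr 1
    refine List.filter_congr fun v hv => ?_
    have := (hy.2 v).1 hv
    rw [← cat] at *
    simp only [Function.comp, Finset.mem_Icc, decide_eq_decide]
    omega
  rw [h1, h2, List.nil_append, aux_stdList_map_add]

lemma aux_Delta_single (𝕂 : Type) [Field 𝕂] (l : List ℕ) :
    Delta 𝕂 (Finsupp.single l 1) =
      ∑ i ∈ Finset.Ico 1 (rk l),
        Finsupp.single (corestrict l (Finset.Icc 1 i)) (1 : 𝕂) ⊗ₜ[𝕂]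
          Finsupp.single (corestrict l (Finset.Icc (i + 1) (rk l))) (1 : 𝕂) := by
  simp [Delta, Finsupp.lsum_single, LinearMap.toSpanSingleton_apply]

lemma aux_catR_single (𝕂 : Type) [Field 𝕂] (y z : List ℕ) :
    catR 𝕂 y (Finsupp.single z 1) = Finsupp.single (cat z y) 1 := by
  simp [catR, Finsupp.lsum_single, LinearMap.toSpanSingleton_apply]

lemma aux_catL_single (𝕂 : Type) [Field 𝕂] (x z : List ℕ) :
    catL 𝕂 x (Finsupp.single z 1) = Finsupp.single (cat x z) 1 := by
  simp [catL, Finsupp.lsum_single, LinearMap.toSpanSingleton_apply]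

/-- `Δ(x×y) = Σ x₍₁₎ ⊗ (x₍₂₎×y) + x ⊗ y + Σ (x×y₍₁₎) ⊗ y₍₂₎`, i.e.
`(𝕂[ST], ×, Δ)` is a nonunital infinitesimal bialgebra. -/
theorem statement_6 (𝕂 : Type) [Field 𝕂] (x y : List ℕ) (n r m s : ℕ)
    (hx : memST x n r) (hy : memST y m s) :
    Delta 𝕂 (Finsupp.single (cat x y) 1) =
      TensorProduct.map LinearMap.id (catR 𝕂 y) (Delta 𝕂 (Finsupp.single x 1))
        + Finsupp.single x (1 : 𝕂) ⊗ₜ[𝕂] Finsupp.single y (1 : 𝕂)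
        + TensorProduct.map (catL 𝕂 x) LinearMap.id (Delta 𝕂 (Finsupp.single y 1)) := by
  obtain ⟨hxST, -, hxrk⟩ := hx
  obtain ⟨hyST, -, hyrk⟩ := hy
  have hr := aux_one_le_rk hxST
  have hs := aux_one_le_rk hyST
  have hcat : rk (cat x y) = rk x + rk y := aux_rk_cat (x := x) hyST.1
  rw [aux_Delta_single, aux_Delta_single, aux_Delta_single, hcat]
  rw [map_sum, map_sum]
  simp only [TensorProduct.map_tmul, LinearMap.id_coe, id_eq, aux_catR_single, aux_catL_single]
  rw [← Finset.sum_Ico_consecutive _ (by omega : 1 ≤ rk x) (by omega : rk x ≤ rk x + rk y)]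
  rw [Finset.sum_eq_sum_Ico_succ_bot (by omega : rk x < rk x + rk y)]
  have e1 : ∑ i ∈ Finset.Ico 1 (rk x),
      Finsupp.single (corestrict (cat x y) (Finset.Icc 1 i)) (1 : 𝕂) ⊗ₜ[𝕂]
        Finsupp.single (corestrict (cat x y) (Finset.Icc (i + 1) (rk x + rk y))) (1 : 𝕂) =
      ∑ i ∈ Finset.Ico 1 (rk x),
      Finsupp.single (corestrict x (Finset.Icc 1 i)) (1 : 𝕂) ⊗ₜ[𝕂]
        Finsupp.single (cat (corestrict x (Finset.Icc (i + 1) (rk x))) y) (1 : 𝕂) := by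
    refine Finset.sum_congr rfl fun i hi => ?_
    rw [Finset.mem_Ico] at hi
    have hA := aux_corA (x := x) hyST (le_of_lt hi.2)
    have hB := aux_corB hxST hyST (le_of_lt hi.2)
    rw [hcat] at hB
    rw [hA, hB]
  have e2 : Finsupp.single (corestrict (cat x y) (Finset.Icc 1 (rk x))) (1 : 𝕂) ⊗ₜ[𝕂]
        Finsupp.single (corestrict (cat x y) (Finset.Icc (rk x + 1) (rk x + rk y))) (1 : 𝕂) =
      Finsupp.single x (1 : 𝕂) ⊗ₜ[𝕂] Finsupp.single y (1 : 𝕂) := by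
    have hA := aux_corA (x := x) hyST (le_refl (rk x))
    have hB := aux_corB hxST hyST (le_refl (rk x))
    rw [hcat] at hB
    rw [hA, aux_corestrict_full hxST, hB,
      aux_corestrict_empty x (by omega : rk x < rk x + 1), aux_cat_nil]
  have e3 : ∑ i ∈ Finset.Ico (rk x + 1) (rk x + rk y),
      Finsupp.single (corestrict (cat x y) (Finset.Icc 1 i)) (1 : 𝕂) ⊗ₜ[𝕂]
        Finsupp.single (corestrict (cat x y) (Finset.Icc (i + 1) (rk x + rk y))) (1 : 𝕂) =
      ∑ j ∈ Finset.Ico 1 (rk y),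
      Finsupp.single (cat x (corestrict y (Finset.Icc 1 j))) (1 : 𝕂) ⊗ₜ[𝕂]
        Finsupp.single (corestrict y (Finset.Icc (j + 1) (rk y))) (1 : 𝕂) := by
    have hmap : Finset.Ico (rk x + 1) (rk x + rk y) =
        (Finset.Ico 1 (rk y)).map ⟨(rk x + ·), add_right_injective (rk x)⟩ := by
      ext a
      simp only [Finset.mem_Ico, Finset.mem_map, Function.Embedding.coeFn_mk]
      constructor
      · rintro ⟨h1, h2⟩
        exact ⟨a - rk x, ⟨by omega, by omega⟩, by omega⟩
      · rintro ⟨b, ⟨hb1, hb2⟩, rfl⟩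
        omega
    rw [hmap, Finset.sum_map]
    refine Finset.sum_congr rfl fun j hj => ?_
    rw [Finset.mem_Ico] at hj
    simp only [Function.Embedding.coeFn_mk]
    have hC := aux_corC hxST hyST (le_of_lt hj.2)
    have hD := aux_corD (x := x) (j := j) hxST hyST
    rw [hcat] at hD
    rw [hC, hD]
  rw [e1, e2, e3, add_assoc]

end SurjPerm
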